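/- For real x ≤ −κ, where κ solves κ·log κ − κ = 1, the limit lim_{n→∞} ∑_{k=0}^{n} χ_n(k)·x^k does not exist (the partial χ-sums are unbounded). -/

import Mathlib

noncomputable def chi (n k : ℕ) : ℝ := ∏ j ∈ Finset.range k, (1 - (j : ℝ) / n)

open Real Filter Finset Set

lemma iter_deriv_exp_neg {s : ℝ} (hs : 0 < s) (n : ℕ) :
    ∀ x ∈ Icc (0:ℝ) s, iteratedDerivWithin n (fun t : ℝ => Real.exp (-t)) (Icc 0 s) x
      = (-1 : ℝ) ^ n * Real.exp (-x) := by
  induction n with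
  | zero => intro x hx; simp
  | succ n ih =>
    intro x hx
    rw [iteratedDerivWithin_succ]
    rw [derivWithin_congr ih (ih x hx)]
    have h1 : HasDerivAt (fun t : ℝ => Real.exp (-t)) (Real.exp (-x) * (-1)) x :=
      (Real.hasDerivAt_exp (-x)).comp x (hasDerivAt_neg x)
    have hd := h1.const_mul ((-1:ℝ)^n)
    rw [hd.hasDerivWithinAt.derivWithin ((uniqueDiffOn_Icc hs) x hx)]
    ring

lemma exp_neg_le_sum {s : ℝ} (hs : 0 < s) {n : ℕ} (hn : Even n) :
    Real.exp (-s) ≤ ∑ m ∈ Finset.range (n + 1), (-s) ^ m / m.factorial := by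
  have hcd : ContDiffOn ℝ n (fun t : ℝ => Real.exp (-t)) (Icc 0 s) :=
    (Real.contDiff_exp.comp contDiff_neg).contDiffOn
  have hdiff : DifferentiableOn ℝ
      (iteratedDerivWithin n (fun t : ℝ => Real.exp (-t)) (Icc 0 s)) (Ioo 0 s) := by
    refine DifferentiableOn.congr (s := Ioo 0 s)
      (((Real.differentiable_exp.comp differentiable_neg).const_mul ((-1:ℝ)^n)).differentiableOn)
      ?_
    intro y hy; exact iter_deriv_exp_neg hs n y (Ioo_subset_Icc_self hy)
  obtain ⟨c, hc, hrem⟩ := taylor_mean_remainder_lagrange hs.ne (by rwa [uIcc_of_le hs.le])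
    (by rwa [uIcc_of_le hs.le, uIoo_of_le hs.le])
  rw [uIcc_of_le hs.le] at hrem
  rw [uIoo_of_le hs.le] at hc
  have htay : taylorWithinEval (fun t : ℝ => Real.exp (-t)) n (Icc 0 s) 0 s
      = ∑ m ∈ Finset.range (n + 1), (-s) ^ m / m.factorial := by
    rw [taylor_within_apply]
    refine Finset.sum_congr rfl fun m hm => ?_
    rw [iter_deriv_exp_neg hs m 0 (Set.left_mem_Icc.2 hs.le)]
    simp only [sub_zero, neg_zero, Real.exp_zero, mul_one, smul_eq_mul]
    rw [neg_pow]
    ring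
  rw [htay] at hrem
  have hiter : iteratedDerivWithin (n+1) (fun t : ℝ => Real.exp (-t)) (Icc 0 s) c
      = (-1:ℝ)^(n+1) * Real.exp (-c) :=
    iter_deriv_exp_neg hs (n+1) c (Ioo_subset_Icc_self hc)
  rw [hiter, (Even.add_one hn).neg_one_pow] at hrem
  have hp : (0:ℝ) < Real.exp (-c) * s ^ (n+1) / (n+1).factorial := by positivity
  have heq : Real.exp (-s) - ∑ m ∈ Finset.range (n + 1), (-s) ^ m / m.factorial
      = -(Real.exp (-c) * s ^ (n+1) / (n+1).factorial) := by rw [hrem]; ring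
  linarith

lemma chi_eq {n k : ℕ} (hn : 0 < n) (hk : k ≤ n) :
    chi n k = (n.descFactorial k : ℝ) / (n:ℝ) ^ k := by
  induction k with
  | zero => simp [chi]
  | succ k ih =>
    have hk' : k ≤ n := Nat.le_of_succ_le hk
    have hn' : (n:ℝ) ≠ 0 := Nat.cast_ne_zero.mpr hn.ne'
    rw [chi, Finset.prod_range_succ, ← chi, ih hk', Nat.descFactorial_succ,
      Nat.cast_mul, Nat.cast_sub hk']
    field_simp
    ring

lemma sum_chi_eq {n : ℕ} (hn : 0 < n) {x : ℝ} (hx : x ≠ 0) :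
    ∑ k ∈ Finset.range (n + 1), chi n k * x ^ k
      = (n.factorial : ℝ) / (n:ℝ) ^ n * x ^ n
        * ∑ m ∈ Finset.range (n + 1), ((n:ℝ) / x) ^ m / m.factorial := by
  rw [Finset.mul_sum, ← Finset.sum_range_reflect (fun k => chi n k * x ^ k) (n+1)]
  refine Finset.sum_congr rfl fun m hm => ?_
  have hm' : m ≤ n := Nat.lt_succ_iff.mp (Finset.mem_range.mp hm)
  have hsub : n + 1 - 1 - m = n - m := by omega
  rw [hsub, chi_eq hn (Nat.sub_le n m)]
  have hdf : ((n.descFactorial (n - m)) : ℝ) = (n.factorial : ℝ) / (m.factorial : ℝ) := by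
    have h := Nat.factorial_mul_descFactorial (Nat.sub_le n m)
    rw [Nat.sub_sub_self hm'] at h
    have : ((m.factorial * n.descFactorial (n - m) : ℕ) : ℝ) = (n.factorial : ℝ) := by
      exact_mod_cast congrArg (Nat.cast : ℕ → ℝ) h
    push_cast at this
    field_simp
    linarith [this]
  rw [hdf]
  have hn' : (n:ℝ) ≠ 0 := Nat.cast_ne_zero.mpr hn.ne'
  have h1 : x ^ (n-m) * x ^ m = x ^ n := pow_sub_mul_pow x hm'
  have h2 : (n:ℝ) ^ (n-m) * (n:ℝ) ^ m = (n:ℝ) ^ n := pow_sub_mul_pow _ hm'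
  have hmf : ((m.factorial : ℕ) : ℝ) ≠ 0 := Nat.cast_ne_zero.mpr m.factorial_pos.ne'
  rw [div_pow, ← h1, ← h2]
  field_simp

theorem chi_geometric_not_summable (κ : ℝ) (hκ1 : 1 < κ) (hκ : κ * Real.log κ - κ = 1)
    (x : ℝ) (hx : x ≤ -κ) :
    ¬ ∃ L : ℝ, Filter.Tendsto (fun n : ℕ => ∑ k ∈ Finset.range (n + 1), chi n k * x ^ k)
      Filter.atTop (nhds L) := by
  rintro ⟨L, hL⟩
  set z : ℝ := -x with hzdef
  have hxz : x = -z := by rw [hzdef, neg_neg]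
  have hz : κ ≤ z := by rw [hzdef]; linarith
  have hz1 : 1 < z := lt_of_lt_of_le hκ1 hz
  have hz0 : 0 < z := by linarith
  have hx0 : x ≠ 0 := by rw [hxz]; simp; linarith
  have hκ0 : (0:ℝ) < κ := by linarith
  have hlogκ : Real.log κ = 1 + 1/κ := by
    field_simp
    nlinarith [hκ]
  have hlogz : 1 + 1/z ≤ Real.log z := by
    have h1 : Real.log κ ≤ Real.log z := Real.log_le_log hκ0 hz
    have h2 : 1/z ≤ 1/κ := one_div_le_one_div_of_le hκ0 hz
    linarith [hlogκ ▸ h1]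
  have hev : ∀ᶠ n in atTop, (∑ k ∈ Finset.range (n + 1), chi n k * x ^ k) < L + 1 :=
    hL.eventually (gt_mem_nhds (lt_add_one L))
  have hsq : (1:ℝ) < Real.sqrt π := by
    rw [show (1:ℝ) = Real.sqrt 1 from Real.sqrt_one.symm]
    exact Real.sqrt_lt_sqrt (by norm_num) (by linarith [Real.pi_gt_three])
  have hst : ∀ᶠ n in atTop, 1 < Stirling.stirlingSeq n :=
    Stirling.tendsto_stirlingSeq_sqrt_pi.eventually (lt_mem_nhds hsq)
  obtain ⟨N₁, hN₁⟩ := eventually_atTop.mp hev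
  obtain ⟨N₂, hN₂⟩ := eventually_atTop.mp hst
  set n : ℕ := 2 * (N₁ + N₂ + ⌈(L+1)^2⌉₊ + 1) with hndef
  have hne : Even n := ⟨N₁ + N₂ + ⌈(L+1)^2⌉₊ + 1, by omega⟩
  have hnpos : 0 < n := by omega
  have hnR : (0:ℝ) < (n:ℝ) := Nat.cast_pos.mpr hnpos
  set s : ℝ := (n:ℝ) / z with hsdef
  have hspos : 0 < s := div_pos hnR hz0
  -- the key sum identity and lower bound on the tail sum
  have hT : Real.exp (-s) ≤ ∑ m ∈ Finset.range (n + 1), ((n:ℝ) / x) ^ m / m.factorial := by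
    have := exp_neg_le_sum hspos hne
    convert this using 2 with m
    rw [hxz, div_neg, hsdef]
  have hxn : x ^ n = z ^ n := by rw [hxz]; exact hne.neg_pow z
  have hC : (0:ℝ) < (n.factorial : ℝ) / (n:ℝ) ^ n * z ^ n := by positivity
  have hSn : (n.factorial : ℝ) / (n:ℝ) ^ n * z ^ n * Real.exp (-s)
      ≤ ∑ k ∈ Finset.range (n + 1), chi n k * x ^ k := by
    rw [sum_chi_eq hnpos hx0, hxn]
    exact mul_le_mul_of_nonneg_left hT hC.le
  -- Stirling lower bound on n!
  have hstn := hN₂ n (by omega)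
  have hdenom : (0:ℝ) < Real.sqrt (2 * n) * ((n:ℝ) / Real.exp 1) ^ n := by positivity
  have hfact : Real.sqrt (2 * n) * ((n:ℝ) / Real.exp 1) ^ n ≤ (n.factorial : ℝ) := by
    have := (one_lt_div hdenom).mp (by rw [Stirling.stirlingSeq] at hstn; exact hstn)
    linarith
  -- the exponential computation
  have hA : ((n:ℝ) / Real.exp 1) ^ n / (n:ℝ) ^ n * z ^ n * Real.exp (-s)
      = Real.exp ((n:ℝ) * (Real.log z - 1 - 1/z)) := by
    have hzn : z ^ n = Real.exp ((n:ℝ) * Real.log z) := by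
      rw [← Real.exp_log hz0, ← Real.exp_nat_mul, Real.log_exp]
    have hen : ((n:ℝ) / Real.exp 1) ^ n = (n:ℝ) ^ n * Real.exp (-(n:ℝ)) := by
      rw [div_pow, ← Real.exp_nat_mul, mul_one, div_eq_mul_inv, ← Real.exp_neg]
    rw [hen, hzn, hsdef]
    have hnn : ((n:ℝ)^n) ≠ 0 := by positivity
    calc ((n:ℝ)^n * Real.exp (-(n:ℝ))) / (n:ℝ)^n * Real.exp ((n:ℝ) * Real.log z)
          * Real.exp (-((n:ℝ)/z))
        = Real.exp (-(n:ℝ)) * Real.exp ((n:ℝ) * Real.log z) * Real.exp (-((n:ℝ)/z)) := by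
          field_simp
      _ = Real.exp (-(n:ℝ) + (n:ℝ) * Real.log z + -((n:ℝ)/z)) := by
          rw [← Real.exp_add, ← Real.exp_add]
      _ = Real.exp ((n:ℝ) * (Real.log z - 1 - 1/z)) := by
          congr 1
          field_simp
          ring
  have hone : (1:ℝ) ≤ Real.exp ((n:ℝ) * (Real.log z - 1 - 1/z)) :=
    Real.one_le_exp (by nlinarith)
  have hLn : L + 1 ≤ Real.sqrt (2 * n) := by
    have hcl : ⌈(L+1)^2⌉₊ ≤ n := by rw [hndef]; omega
    have h1 : ((L+1)^2 : ℝ) ≤ (n:ℝ) := le_trans (Nat.le_ceil _) (Nat.cast_le.mpr hcl)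
    have h2 : ((L+1)^2 : ℝ) ≤ 2 * n := by linarith
    calc L + 1 ≤ |L + 1| := le_abs_self _
      _ = Real.sqrt ((L+1)^2) := (Real.sqrt_sq_eq_abs _).symm
      _ ≤ Real.sqrt (2 * n) := Real.sqrt_le_sqrt h2
  have hchain : L + 1 ≤ ∑ k ∈ Finset.range (n + 1), chi n k * x ^ k := by
    calc L + 1 ≤ Real.sqrt (2 * n) := hLn
      _ ≤ Real.sqrt (2 * n) * Real.exp ((n:ℝ) * (Real.log z - 1 - 1/z)) := by
          nlinarith [Real.sqrt_nonneg (2 * (n:ℝ))]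
      _ = Real.sqrt (2 * n) * (((n:ℝ) / Real.exp 1) ^ n / (n:ℝ) ^ n * z ^ n * Real.exp (-s)) := by
          rw [hA]
      _ ≤ (n.factorial : ℝ) / (n:ℝ) ^ n * z ^ n * Real.exp (-s) := by
          have hpos : (0:ℝ) < z ^ n * Real.exp (-s) / (n:ℝ) ^ n := by positivity
          calc Real.sqrt (2 * n) * (((n:ℝ) / Real.exp 1) ^ n / (n:ℝ) ^ n * z ^ n * Real.exp (-s))
              = (Real.sqrt (2 * n) * ((n:ℝ) / Real.exp 1) ^ n) * (z ^ n * Real.exp (-s) / (n:ℝ) ^ n) := by ring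
            _ ≤ (n.factorial : ℝ) * (z ^ n * Real.exp (-s) / (n:ℝ) ^ n) :=
                mul_le_mul_of_nonneg_right hfact hpos.le
            _ = (n.factorial : ℝ) / (n:ℝ) ^ n * z ^ n * Real.exp (-s) := by ring
      _ ≤ _ := hSn
  exact absurd (hN₁ n (by omega)) (not_lt.mpr hchain)
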